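/- arXiv:1408.1870 — 2 statements merged into one kernel-verified Lean document; each statement's English description precedes it below -/
import Mathlib

section
/- Let n ≥ 3 be odd and let x_i = cos((2i−1)π/(2n)) for i = 1, …, n be the Chebyshev knots of the first kind, with Hermite–Fejér fundamental polynomials h_i(x) = (1/n²)·(T_n(x)/(x − x_i))²·(1 − x·x_i) (the quotient T_n(x)/(x − x_i) being a polynomial since T_n(x_i) = 0). Then for every i ≠ (n+1)/2, the second derivative at 0 satisfies h_i''(0) = 2/x_i². -/
open Finset Polynomial

lemma hf_aux (q : ℝ[X]) (c r : ℝ) (h0 : eval 0 q = 0) :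
    eval 0 (derivative (derivative (C c * q ^ 2 * (1 - C r * X))))
      = 2 * c * (eval 0 (derivative q)) ^ 2 := by
  simp [derivative_mul, derivative_pow, h0]
  ring

/-- For odd `n ≥ 3` and the Chebyshev knots of the first kind
`x i = cos ((2i-1)π/(2n))`, `i = 1,…,n`, the Hermite–Fejér fundamental polynomial
`h i t = (1/n²) * ((Tₙ /ₘ (X - C (x i))).eval t)² * (1 - t * x i)` satisfies
`(h i)'' (0) = 2 / (x i)²` for every `i ≠ (n+1)/2`. -/
theorem hermiteFejer_chebyshev_secondDeriv_at_zero (n : ℕ) (hn : 3 ≤ n) (hodd : Odd n)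
    (x : ℕ → ℝ)
    (hx : ∀ i, 1 ≤ i → i ≤ n → x i = Real.cos ((2 * (i : ℝ) - 1) * Real.pi / (2 * n)))
    (h : ℕ → ℝ → ℝ)
    (hh : ∀ i t, h i t = (1 / (n : ℝ) ^ 2)
      * ((Polynomial.Chebyshev.T ℝ n /ₘ (X - C (x i))).eval t) ^ 2 * (1 - t * x i)) :
    ∀ i, 1 ≤ i → i ≤ n → i ≠ (n + 1) / 2 →
      iteratedDeriv 2 (h i) 0 = 2 / (x i) ^ 2 := by
  intro i hi1 hin hmid
  obtain ⟨m, hm⟩ := hodd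
  have hn0 : (n : ℝ) ≠ 0 := by positivity
  have hpi := Real.pi_ne_zero
  set r := x i with hr
  set θ : ℝ := (2 * (i : ℝ) - 1) * Real.pi / (2 * n) with hθ
  have hxi : r = Real.cos θ := hx i hi1 hin
  -- r ≠ 0
  have hr0 : r ≠ 0 := by
    rw [hxi]
    intro hc
    rw [Real.cos_eq_zero_iff] at hc
    obtain ⟨k, hk⟩ := hc
    have hk' : (2 * (i : ℝ) - 1) = (2 * k + 1) * n := by
      field_simp [hθ] at hk
      have h2 : (Real.pi * 2 : ℝ) ≠ 0 := by positivity
      apply mul_right_cancel₀ h2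
      have hθn : θ * (2 * n) = (2 * (i : ℝ) - 1) * Real.pi := by
        rw [hθ]; exact div_mul_cancel₀ _ (mul_ne_zero two_ne_zero hn0)
      linear_combination (2 * (n : ℝ)) * hk - 2 * hθn
    have hkZ : 2 * (i : ℤ) - 1 = (2 * k + 1) * n := by exact_mod_cast hk'
    have hnZ : (3 : ℤ) ≤ n := by exact_mod_cast hn
    have hiZ : 1 ≤ (i : ℤ) ∧ (i : ℤ) ≤ n := ⟨by exact_mod_cast hi1, by exact_mod_cast hin⟩
    have hkpos : 0 < 2 * k + 1 := by nlinarith [hiZ.1, hiZ.2]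
    have hklt : 2 * k + 1 < 2 := by nlinarith [hiZ.1, hiZ.2]
    have hk0 : k = 0 := by omega
    subst hk0
    have : 2 * (i : ℤ) - 1 = n := by linarith [hkZ]
    omega
  -- cos (n * θ) = 0 and cos(n * π/2) = 0
  have hb : Real.cos (n * θ) = 0 := by
    rw [Real.cos_eq_zero_iff]
    refine ⟨(i : ℤ) - 1, ?_⟩
    rw [hθ]
    push_cast
    field_simp
    ring
  have hcos0 : Real.cos (n * (Real.pi / 2)) = 0 := by
    have : (n : ℝ) * (Real.pi / 2) = m * Real.pi + Real.pi / 2 := by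
      rw [hm]; push_cast; ring
    rw [this, Real.cos_add_pi_div_two, Real.sin_nat_mul_pi, neg_zero]
  set T : ℝ[X] := Polynomial.Chebyshev.T ℝ n with hT
  set q : ℝ[X] := T /ₘ (X - C r) with hq
  -- T = (X - C r) * q
  have hTr : T.eval r = 0 := by
    rw [hxi, hT, Polynomial.Chebyshev.T_real_cos]
    push_cast
    exact hb
  have hfact : T = (X - C r) * q := by
    have := Polynomial.modByMonic_add_div T (X - C r)
    rw [Polynomial.modByMonic_X_sub_C_eq_C_eval, hTr, map_zero, zero_add] at this
    exact this.symm
  -- q.eval 0 = 0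
  have hT0 : T.eval 0 = 0 := by
    have h0 : T.eval (Real.cos (Real.pi / 2)) = 0 := by
      rw [hT, Polynomial.Chebyshev.T_real_cos]
      push_cast
      exact hcos0
    simpa [Real.cos_pi_div_two] using h0
  have ha : q.eval 0 = 0 := by
    have := congrArg (Polynomial.eval 0) hfact
    simp [hT0] at this
    rcases this with h1 | h1
    · exact absurd h1 hr0
    · exact h1
  -- derivative of T at 0
  have hT'0 : (Polynomial.derivative T).eval 0 = n * Real.sin (n * (Real.pi / 2)) := by
    have h1 : HasDerivAt (fun θ : ℝ => T.eval (Real.cos θ))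
        ((Polynomial.derivative T).eval (Real.cos (Real.pi / 2)) * (-Real.sin (Real.pi / 2)))
        (Real.pi / 2) :=
      HasDerivAt.comp _ (T.hasDerivAt _) (Real.hasDerivAt_cos _)
    have h2 : HasDerivAt (fun θ : ℝ => Real.cos ((n : ℝ) * θ))
        (-Real.sin ((n : ℝ) * (Real.pi / 2)) * n) (Real.pi / 2) := by
      have := HasDerivAt.comp (Real.pi / 2) (Real.hasDerivAt_cos ((n : ℝ) * (Real.pi / 2)))
        ((hasDerivAt_id (Real.pi / 2)).const_mul (n : ℝ))
      simpa [Function.comp_def] using this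
    have heq : (fun θ : ℝ => T.eval (Real.cos θ)) = fun θ : ℝ => Real.cos (n * θ) := by
      funext t
      rw [hT, Polynomial.Chebyshev.T_real_cos]
      push_cast
      ring_nf
    rw [heq] at h1
    have := h1.unique h2
    rw [Real.cos_pi_div_two, Real.sin_pi_div_two] at this
    linarith [this]
  have hsin2 : Real.sin (n * (Real.pi / 2)) ^ 2 = 1 := by
    have := Real.sin_sq_add_cos_sq ((n : ℝ) * (Real.pi / 2))
    rw [hcos0] at this
    linarith
  -- q'(0)
  set b : ℝ := (Polynomial.derivative q).eval 0 with hbdef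
  have hb2 : (r * b) ^ 2 = (n : ℝ) ^ 2 := by
    have hder := congrArg Polynomial.derivative hfact
    rw [Polynomial.derivative_mul, Polynomial.derivative_sub, Polynomial.derivative_X,
      Polynomial.derivative_C, sub_zero, one_mul] at hder
    have h3 := congrArg (Polynomial.eval 0) hder
    simp [ha] at h3
    have h4 : r * b = -((n : ℝ) * Real.sin (n * (Real.pi / 2))) := by
      rw [hT'0] at h3
      rw [hbdef]
      linarith [h3]
    rw [h4]
    nlinarith [hsin2]
  -- the function h i is a polynomial eval
  set P : ℝ[X] := C (1 / (n : ℝ) ^ 2) * q ^ 2 * (1 - C r * X) with hP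
  have hfun : h i = fun t => P.eval t := by
    funext t
    rw [hh, hP]
    simp only [eval_mul, eval_pow, eval_C, eval_sub, eval_one, eval_X]
    ring
  rw [hfun]
  have hd1 : deriv (fun t => P.eval t) = fun t => (Polynomial.derivative P).eval t := by
    funext t; exact Polynomial.deriv _
  have hd2 : deriv (fun t => (Polynomial.derivative P).eval t)
      = fun t => (Polynomial.derivative (Polynomial.derivative P)).eval t := by
    funext t; exact Polynomial.deriv _
  have h2 : iteratedDeriv 2 (fun t => P.eval t) 0
      = (Polynomial.derivative (Polynomial.derivative P)).eval 0 := by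
    rw [show (2 : ℕ) = 1 + 1 from rfl, iteratedDeriv_succ, iteratedDeriv_one, hd1, hd2]
  rw [h2, hP, hf_aux q _ r ha, ← hbdef]
  field_simp
  linear_combination hb2
end

section
/- For every odd integer n ≥ 3, ∑_{k=1}^{(n−1)/2} 2/sin²(kπ/n) = (n² − 1)/3. -/
open Finset Real

lemma aux_A (n : ℕ) (z : ℂ) (hz : z ^ n = 1) (hz1 : z ≠ 1) :
    (1 - z) * ∑ j ∈ Finset.range n, (j : ℂ) * z ^ j = -n := by
  have h0 : ∑ j ∈ Finset.range n, z ^ j = 0 := by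
    rw [geom_sum_eq hz1, hz, sub_self, zero_div]
  calc (1 - z) * ∑ j ∈ Finset.range n, (j : ℂ) * z ^ j
      = ∑ j ∈ Finset.range n,
        (z * z ^ j - (((j+1 : ℕ) : ℂ) * z ^ (j+1) - (j : ℂ) * z ^ j)) := by
        rw [Finset.mul_sum]
        refine Finset.sum_congr rfl fun j _ => ?_
        push_cast; ring
    _ = z * ∑ j ∈ Finset.range n, z ^ j
        - ((n : ℂ) * z ^ n - ((0:ℕ) : ℂ) * z ^ 0) := by
        rw [Finset.sum_sub_distrib, ← Finset.mul_sum,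
          Finset.sum_range_sub (fun j => (j : ℂ) * z ^ j)]
    _ = -n := by rw [h0, hz]; simp

lemma aux_G (n : ℕ) (hn : 0 < n) (w : ℂ) (hw : w ^ n = 1) :
    ∑ k ∈ Finset.Icc 1 (n-1), w ^ k = if w = 1 then ((n:ℂ) - 1) else -1 := by
  have hIcc : Finset.Icc 1 (n-1) = Finset.Ico 1 n := by
    rw [← Finset.Ico_add_one_right_eq_Icc]
    congr 1
    omega
  split_ifs with h1
  · subst h1
    simp only [one_pow, Finset.sum_const, nsmul_eq_mul, mul_one, hIcc, Nat.card_Ico]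
    push_cast [Nat.cast_sub hn]
    ring
  · have h0 : ∑ k ∈ Finset.range n, w ^ k = 0 := by
      rw [geom_sum_eq h1, hw, sub_self, zero_div]
    have h2 := Finset.sum_eq_sum_Ico_succ_bot hn (fun k => w ^ k)
    rw [← Finset.range_eq_Ico] at h2
    rw [hIcc]
    rw [h0] at h2
    simp only [pow_zero, zero_add] at h2
    linear_combination -h2

lemma sumId (n : ℕ) : ∑ j ∈ Finset.range n, (j : ℂ) = (n : ℂ) * ((n : ℂ) - 1) / 2 := by
  induction n with
  | zero => simp
  | succ m ih => rw [Finset.sum_range_succ, ih]; push_cast; ring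

lemma sumSq (n : ℕ) :
    ∑ j ∈ Finset.range n, (j : ℂ)^2 = (n:ℂ) * ((n:ℂ) - 1) * (2*(n:ℂ) - 1) / 6 := by
  induction n with
  | zero => simp
  | succ m ih => rw [Finset.sum_range_succ, ih]; push_cast; ring

lemma sumC (n : ℕ) (hn : 0 < n) (ζ : ℂ) (hζ : IsPrimitiveRoot ζ n) :
    ∑ k ∈ Finset.Icc 1 (n-1),
      (4 * ((1 - ζ ^ k)⁻¹ - ((1 - ζ ^ k)⁻¹)^2)) = ((n:ℂ)^2 - 1)/3 := by
  have hN : (n:ℂ) ≠ 0 := by exact_mod_cast hn.ne'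
  set K := Finset.Icc 1 (n-1) with hK
  set A : ℕ → ℂ := fun k => ∑ j ∈ Finset.range n, (j:ℂ) * (ζ^k)^j with hA
  have hpow : ∀ m : ℕ, (ζ^m)^n = 1 := fun m => by
    rw [← pow_mul, mul_comm, pow_mul, hζ.pow_eq_one, one_pow]
  have hc : ∀ k ∈ K, (1 - ζ^k)⁻¹ = -(A k)/n := by
    intro k hk
    simp only [hK, Finset.mem_Icc] at hk
    have hz1 : ζ^k ≠ 1 := hζ.pow_ne_one_of_pos_of_lt (by omega) (by omega)
    have hkey := aux_A n (ζ^k) (hpow k) hz1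
    refine inv_eq_of_mul_eq_one_right ?_
    have : -(A k)/(n:ℂ) * (n:ℂ) = -(A k) := by field_simp
    field_simp
    linear_combination -hkey
  have hG : ∀ j : ℕ, ∑ k ∈ K, (ζ^j)^k = (if n ∣ j then (n:ℂ) else 0) - 1 := by
    intro j
    rw [hK, aux_G n hn _ (hpow j)]
    by_cases hd : n ∣ j
    · rw [if_pos ((hζ.pow_eq_one_iff_dvd j).mpr hd), if_pos hd]
    · rw [if_neg (fun h => hd ((hζ.pow_eq_one_iff_dvd j).mp h)), if_neg hd]
      ring
  have hSA : ∑ k ∈ K, A k = -((n:ℂ) * ((n:ℂ)-1)/2) := by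
    simp only [hA]
    rw [Finset.sum_comm]
    calc ∑ j ∈ Finset.range n, ∑ k ∈ K, (j:ℂ) * (ζ^k)^j
        = ∑ j ∈ Finset.range n, (j:ℂ) * ((if n ∣ j then (n:ℂ) else 0) - 1) := by
          refine Finset.sum_congr rfl fun j hj => ?_
          rw [← Finset.mul_sum, ← hG j]
          congr 1
          exact Finset.sum_congr rfl fun k _ => by rw [← pow_mul, ← pow_mul, mul_comm]
      _ = ∑ j ∈ Finset.range n, -(j:ℂ) := by
          refine Finset.sum_congr rfl fun j hj => ?_
          rw [Finset.mem_range] at hj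
          by_cases hd : n ∣ j
          · have hj0 : j = 0 := Nat.eq_zero_of_dvd_of_lt hd hj
            subst hj0; simp
          · rw [if_neg hd]; ring
      _ = -((n:ℂ) * ((n:ℂ)-1)/2) := by
          rw [Finset.sum_neg_distrib, sumId]
  have hInner : ∀ j ∈ Finset.range n,
      ∑ l ∈ Finset.range n, (if n ∣ (j+l) then (n:ℂ)*((j:ℂ)*(l:ℂ)) else 0)
        = (n:ℂ)*(j:ℂ)*((n:ℂ)-(j:ℂ)) := by
    intro j hj
    rw [Finset.mem_range] at hj
    by_cases hj0 : j = 0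
    · subst hj0; simp
    · rw [Finset.sum_eq_single (n - j)]
      · rw [if_pos (by rw [show j + (n - j) = n by omega])]
        push_cast [Nat.cast_sub hj.le]
        ring
      · intro l hl hlne
        rw [Finset.mem_range] at hl
        rw [if_neg]
        intro hdvd
        rcases hdvd with ⟨c, hc⟩
        rcases c with _ | _ | c
        · omega
        · omega
        · have h2n : n * 2 ≤ n * (c + 1 + 1) := Nat.mul_le_mul_left n (by omega)
          omega
      · intro h
        exact absurd (Finset.mem_range.mpr (by omega)) h
  have hSA2 : ∑ k ∈ K, (A k)^2
      = (n:ℂ)*(n:ℂ)*((n:ℂ)*((n:ℂ)-1)/2) - (n:ℂ)*((n:ℂ)*((n:ℂ)-1)*(2*(n:ℂ)-1)/6)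
        - ((n:ℂ)*((n:ℂ)-1)/2)^2 := by
    have hsq : ∀ k, (A k)^2
        = ∑ j ∈ Finset.range n, ∑ l ∈ Finset.range n, ((j:ℂ)*(l:ℂ)) * (ζ^(j+l))^k := by
      intro k
      rw [sq]
      simp only [hA]
      rw [Finset.sum_mul_sum]
      refine Finset.sum_congr rfl fun j _ => Finset.sum_congr rfl fun l _ => ?_
      rw [show ((j:ℂ) * (ζ^k)^j) * ((l:ℂ) * (ζ^k)^l)
          = ((j:ℂ)*(l:ℂ)) * ((ζ^k)^j * (ζ^k)^l) by ring, ← pow_add, ← pow_mul, mul_comm k,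
        pow_mul]
    calc ∑ k ∈ K, (A k)^2
        = ∑ j ∈ Finset.range n, ∑ l ∈ Finset.range n, ((j:ℂ)*(l:ℂ))
            * ((if n ∣ (j+l) then (n:ℂ) else 0) - 1) := by
          rw [Finset.sum_congr rfl fun k _ => hsq k, Finset.sum_comm]
          refine Finset.sum_congr rfl fun j _ => ?_
          rw [Finset.sum_comm]
          refine Finset.sum_congr rfl fun l _ => ?_
          rw [← Finset.mul_sum, hG (j+l)]
      _ = ∑ j ∈ Finset.range n, ((∑ l ∈ Finset.range n,
            (if n ∣ (j+l) then (n:ℂ)*((j:ℂ)*(l:ℂ)) else 0))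
            - (j:ℂ) * ∑ l ∈ Finset.range n, (l:ℂ)) := by
          refine Finset.sum_congr rfl fun j _ => ?_
          rw [Finset.mul_sum, ← Finset.sum_sub_distrib]
          refine Finset.sum_congr rfl fun l _ => ?_
          split_ifs <;> ring
      _ = ∑ j ∈ Finset.range n, ((n:ℂ)*(j:ℂ)*((n:ℂ)-(j:ℂ))
            - (j:ℂ) * ((n:ℂ) * ((n:ℂ)-1)/2)) := by
          refine Finset.sum_congr rfl fun j hj => ?_
          rw [hInner j hj, sumId]
      _ = (n:ℂ)*(n:ℂ)*(∑ j ∈ Finset.range n, (j:ℂ))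
            - (n:ℂ)*(∑ j ∈ Finset.range n, (j:ℂ)^2)
            - ((n:ℂ) * ((n:ℂ)-1)/2) * (∑ j ∈ Finset.range n, (j:ℂ)) := by
          rw [Finset.mul_sum, Finset.mul_sum, Finset.mul_sum, ← Finset.sum_sub_distrib,
            ← Finset.sum_sub_distrib]
          exact Finset.sum_congr rfl fun j _ => by ring
      _ = _ := by rw [sumId, sumSq]; ring
  calc ∑ k ∈ K, (4 * ((1 - ζ ^ k)⁻¹ - ((1 - ζ ^ k)⁻¹)^2))
      = ∑ k ∈ K, ((-4/(n:ℂ)) * A k + (-4/(n:ℂ)^2) * (A k)^2) := by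
        refine Finset.sum_congr rfl fun k hk => ?_
        rw [hc k hk]
        ring
    _ = (-4/(n:ℂ)) * (∑ k ∈ K, A k) + (-4/(n:ℂ)^2) * (∑ k ∈ K, (A k)^2) := by
        rw [Finset.sum_add_distrib, ← Finset.mul_sum, ← Finset.mul_sum]
    _ = ((n:ℂ)^2 - 1)/3 := by
        rw [hSA, hSA2]
        field_simp
        ring

lemma aux_term (n k : ℕ) (hn : 0 < n) (hk1 : 1 ≤ k) (hk2 : k ≤ n - 1) :
    ((1 / Real.sin ((k : ℝ) * Real.pi / n) ^ 2 : ℝ) : ℂ) =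
      4 * ((1 - Complex.exp (2 * Real.pi * Complex.I / n) ^ k)⁻¹
        - ((1 - Complex.exp (2 * Real.pi * Complex.I / n) ^ k)⁻¹) ^ 2) := by
  have hζ := Complex.isPrimitiveRoot_exp n hn.ne'
  have hkn : k < n := by omega
  set θ : ℝ := (k : ℝ) * Real.pi / n with hθ
  have hθpos : 0 < θ := by
    apply div_pos (mul_pos _ Real.pi_pos) (by exact_mod_cast hn)
    exact_mod_cast hk1
  have hθlt : θ < Real.pi := by
    rw [hθ, div_lt_iff₀ (by exact_mod_cast hn)]
    have : (k : ℝ) < n := by exact_mod_cast hkn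
    nlinarith [Real.pi_pos]
  have hs : Real.sin θ ≠ 0 := (Real.sin_pos_of_pos_of_lt_pi hθpos hθlt).ne'
  set e : ℂ := Complex.exp (θ * Complex.I) with he
  have he0 : e ≠ 0 := Complex.exp_ne_zero _
  have h1 : Complex.exp (2 * Real.pi * Complex.I / n) ^ k = e ^ 2 := by
    rw [he, ← Complex.exp_nat_mul, ← Complex.exp_nat_mul]
    congr 1
    have hn0 : (n : ℂ) ≠ 0 := by exact_mod_cast hn.ne'
    push_cast [hθ]
    field_simp
  have hz1 : (1 : ℂ) - e ^ 2 ≠ 0 := by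
    rw [← h1]
    exact sub_ne_zero.mpr (hζ.pow_ne_one_of_pos_of_lt (by omega) hkn).symm
  have h2 : ((Real.sin θ : ℝ) : ℂ) = (e⁻¹ - e) * Complex.I / 2 := by
    rw [Complex.ofReal_sin, Complex.sin, he, ← Complex.exp_neg]
    ring_nf
  rw [h1]
  have hsC : ((Real.sin θ : ℝ) : ℂ) ≠ 0 := by exact_mod_cast hs
  push_cast
  rw [Complex.ofReal_sin] at h2 hsC
  have hI : Complex.I ^ 2 = -1 := Complex.I_sq
  have h3 : Complex.sin (θ : ℂ) ^ 2 = -(e⁻¹ - e)^2 / 4 := by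
    rw [h2]
    linear_combination ((e⁻¹ - e)^2/4) * hI
  have hs2 : Complex.sin (θ : ℂ) ^ 2 ≠ 0 := pow_ne_zero _ hsC
  have key : Complex.sin (θ : ℂ) ^ 2 * (4 * ((1 - e^2)⁻¹ - ((1 - e^2)⁻¹)^2)) = 1 := by
    rw [h3]
    field_simp
    ring
  rw [div_eq_iff hs2]
  linear_combination -key

/-- For every odd `n ≥ 3`, `∑_{k=1}^{(n-1)/2} 2 / sin²(kπ/n) = (n² - 1)/3`. -/
theorem sum_two_div_sin_sq (n : ℕ) (hn : 3 ≤ n) (hodd : Odd n) :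
    ∑ k ∈ Finset.Icc 1 ((n - 1) / 2),
      2 / Real.sin ((k : ℝ) * Real.pi / n) ^ 2 = ((n : ℝ) ^ 2 - 1) / 3 := by
  obtain ⟨m, hm⟩ := hodd
  have hn0 : 0 < n := by omega
  have hm1 : 1 ≤ m := by omega
  set f : ℕ → ℝ := fun k => 1 / Real.sin ((k : ℝ) * Real.pi / n) ^ 2 with hf
  have hm2 : (n - 1) / 2 = m := by omega
  have hIccIoc : ∀ t : ℕ, Finset.Icc 1 t = Finset.Ioc 0 t := by
    intro t; ext x; simp only [Finset.mem_Icc, Finset.mem_Ioc]; omega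
  -- reflection
  have hrefl : ∑ k ∈ Finset.Ioc m (2*m), f k = ∑ k ∈ Finset.Ioc 0 m, f k := by
    refine Finset.sum_bij' (fun k _ => n - k) (fun k _ => n - k) ?_ ?_ ?_ ?_ ?_
    · intro a ha; simp only [Finset.mem_Ioc] at ha ⊢; omega
    · intro a ha; simp only [Finset.mem_Ioc] at ha ⊢; omega
    · intro a ha; simp only [Finset.mem_Ioc] at ha; omega
    · intro a ha; simp only [Finset.mem_Ioc] at ha; omega
    · intro a ha
      simp only [Finset.mem_Ioc] at ha
      simp only [hf]
      congr 2
      have hcast : ((n - a : ℕ) : ℝ) = (n : ℝ) - a := by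
        push_cast [Nat.cast_sub (by omega : a ≤ n)]; ring
      have hnR : (n : ℝ) ≠ 0 := by positivity
      rw [hcast, show ((n:ℝ) - a) * Real.pi / n = Real.pi - a * Real.pi / n by
        field_simp, Real.sin_pi_sub]
  have split : ∑ k ∈ Finset.Ioc 0 m, f k + ∑ k ∈ Finset.Ioc m (2*m), f k
      = ∑ k ∈ Finset.Ioc 0 (2*m), f k :=
    Finset.sum_Ioc_consecutive f (by omega) (by omega)
  -- complex evaluation of the full sum
  have hζ := Complex.isPrimitiveRoot_exp n hn0.ne'
  have hsumC := sumC n hn0 _ hζ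
  have hreal : ∑ k ∈ Finset.Icc 1 (n-1), f k = ((n:ℝ)^2 - 1)/3 := by
    have hcast : ((∑ k ∈ Finset.Icc 1 (n-1), f k : ℝ) : ℂ) = ((n:ℂ)^2 - 1)/3 := by
      rw [Complex.ofReal_sum, ← hsumC]
      refine Finset.sum_congr rfl fun k hk => ?_
      simp only [Finset.mem_Icc] at hk
      exact aux_term n k hn0 hk.1 hk.2
    exact_mod_cast hcast
  calc ∑ k ∈ Finset.Icc 1 ((n - 1) / 2), 2 / Real.sin ((k : ℝ) * Real.pi / n) ^ 2
      = ∑ k ∈ Finset.Ioc 0 m, 2 * f k := by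
        rw [hm2, hIccIoc]
        exact Finset.sum_congr rfl fun k _ => by rw [hf]; ring
    _ = ∑ k ∈ Finset.Ioc 0 m, f k + ∑ k ∈ Finset.Ioc m (2*m), f k := by
        rw [hrefl, ← Finset.sum_add_distrib]
        exact Finset.sum_congr rfl fun k _ => by ring
    _ = ∑ k ∈ Finset.Icc 1 (n-1), f k := by
        rw [split, hIccIoc, show n - 1 = 2*m by omega]
    _ = ((n : ℝ) ^ 2 - 1) / 3 := hreal
end
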